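/- Let n ≥ 3 and let 𝓕 ⊆ ([n] choose 2) be a family of 2-element subsets of [n] such that |A∩B| + |B∩C| + |C∩A| ≥ 3 for all A, B, C ∈ 𝓕. Then |𝓕| ≤ n. -/

import Mathlib

/-- `d A B C = |A∩B| + |B∩C| + |C∩A|`. -/
def dd (A B C : Finset ℕ) : ℕ := (A ∩ B).card + (B ∩ C).card + (C ∩ A).card

lemma pair_eq {D : Finset ℕ} (hD : D.card = 2) {p q : ℕ} (hp : p ∈ D) (hq : q ∈ D)
    (hpq : p ≠ q) : D = {p, q} := by
  refine (Finset.eq_of_subset_of_card_le ?_ ?_).symm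
  · simp [Finset.insert_subset_iff, hp, hq]
  · rw [hD, Finset.card_pair hpq]

lemma star {n : ℕ} {𝓕 : Finset (Finset ℕ)} {a : ℕ}
    (hc : ∀ A ∈ 𝓕, A.card = 2 ∧ A ⊆ Finset.Icc 1 n) (ha : ∀ A ∈ 𝓕, a ∈ A) :
    𝓕.card ≤ n := by
  have key : ∀ A ∈ 𝓕, ∃ x, A.erase a = {x} := by
    intro A hA
    have h1 : (A.erase a).card = 1 := by
      rw [Finset.card_erase_of_mem (ha A hA), (hc A hA).1]
    exact Finset.card_eq_one.mp h1
  have h : 𝓕.card ≤ (Finset.Icc 1 n).card := by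
    apply Finset.card_le_card_of_injOn (fun A => (A.erase a).sum id)
    · intro A hA
      obtain ⟨x, hx⟩ := key A hA
      have hxA : x ∈ A := by
        have : x ∈ A.erase a := by rw [hx]; simp
        exact Finset.mem_of_mem_erase this
      simp only [hx, Finset.sum_singleton, id]
      exact (hc A hA).2 hxA
    · intro A hA B hB hAB
      obtain ⟨x, hx⟩ := key A hA
      obtain ⟨y, hy⟩ := key B hB
      simp only [hx, hy, Finset.sum_singleton, id] at hAB
      have : A.erase a = B.erase a := by rw [hx, hy, hAB]
      calc A = insert a (A.erase a) := (Finset.insert_erase (ha A hA)).symm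
      _ = insert a (B.erase a) := by rw [this]
      _ = B := Finset.insert_erase (ha B hB)
  simpa using h

theorem stmt7 (n : ℕ) (hn : 3 ≤ n) (𝓕 : Finset (Finset ℕ))
    (h𝓕 : 𝓕 ⊆ (Finset.Icc 1 n).powersetCard 2)
    (hd : ∀ A ∈ 𝓕, ∀ B ∈ 𝓕, ∀ C ∈ 𝓕, 3 ≤ dd A B C) :
    𝓕.card ≤ n := by
  have hc : ∀ A ∈ 𝓕, A.card = 2 ∧ A ⊆ Finset.Icc 1 n := by
    intro A hA
    have := Finset.mem_powersetCard.mp (h𝓕 hA)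
    exact ⟨this.2, this.1⟩
  -- pairwise intersecting
  have hint : ∀ A ∈ 𝓕, ∀ B ∈ 𝓕, (A ∩ B).Nonempty := by
    intro A hA B hB
    have h3 := hd A hA A hA B hB
    unfold dd at h3
    rw [Finset.inter_self, (hc A hA).1, Finset.inter_comm B A] at h3
    rw [← Finset.card_pos]
    omega
  rcases Finset.eq_empty_or_nonempty 𝓕 with h | ⟨E, hE⟩
  · simp [h]
  obtain ⟨a, b, hab, hEab⟩ := Finset.card_eq_two.mp (hc E hE).1
  by_cases h1 : ∀ A ∈ 𝓕, a ∈ A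
  · exact star hc h1
  by_cases h2 : ∀ A ∈ 𝓕, b ∈ A
  · exact star hc h2
  push_neg at h1 h2
  obtain ⟨B, hB, haB⟩ := h1
  obtain ⟨C, hC, hbC⟩ := h2
  -- B contains b, C contains a
  have hbB : b ∈ B := by
    obtain ⟨x, hx⟩ := hint E hE B hB
    rw [Finset.mem_inter, hEab] at hx
    rcases Finset.mem_insert.mp hx.1 with h | h
    · exact absurd (h ▸ hx.2) haB
    · exact Finset.mem_singleton.mp h ▸ hx.2
  have haC : a ∈ C := by
    obtain ⟨x, hx⟩ := hint E hE C hC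
    rw [Finset.mem_inter, hEab] at hx
    rcases Finset.mem_insert.mp hx.1 with h | h
    · exact h ▸ hx.2
    · exact absurd ((Finset.mem_singleton.mp h) ▸ hx.2) hbC
  obtain ⟨c, hc'⟩ := hint B hB C hC
  rw [Finset.mem_inter] at hc'
  have hca : c ≠ a := fun h => haB (h ▸ hc'.1)
  have hcb : c ≠ b := fun h => hbC (h ▸ hc'.2)
  have hBeq : B = {b, c} := pair_eq (hc B hB).1 hbB hc'.1 (Ne.symm hcb)
  have hCeq : C = {a, c} := pair_eq (hc C hC).1 haC hc'.2 (Ne.symm hca)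
  -- every edge is inside {a,b,c}
  have hsub : 𝓕 ⊆ ({a, b, c} : Finset ℕ).powersetCard 2 := by
    intro D hD
    rw [Finset.mem_powersetCard]
    refine ⟨?_, (hc D hD).1⟩
    have d1 : a ∈ D ∨ b ∈ D := by
      obtain ⟨x, hx⟩ := hint D hD E hE
      rw [Finset.mem_inter, hEab] at hx
      rcases Finset.mem_insert.mp hx.2 with h | h
      · exact Or.inl (h ▸ hx.1)
      · exact Or.inr ((Finset.mem_singleton.mp h) ▸ hx.1)
    have d2 : b ∈ D ∨ c ∈ D := by
      obtain ⟨x, hx⟩ := hint D hD B hB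
      rw [Finset.mem_inter, hBeq] at hx
      rcases Finset.mem_insert.mp hx.2 with h | h
      · exact Or.inl (h ▸ hx.1)
      · exact Or.inr ((Finset.mem_singleton.mp h) ▸ hx.1)
    have d3 : a ∈ D ∨ c ∈ D := by
      obtain ⟨x, hx⟩ := hint D hD C hC
      rw [Finset.mem_inter, hCeq] at hx
      rcases Finset.mem_insert.mp hx.2 with h | h
      · exact Or.inl (h ▸ hx.1)
      · exact Or.inr ((Finset.mem_singleton.mp h) ▸ hx.1)
    have hDcard := (hc D hD).1
    -- two of a,b,c are in D
    rcases d1 with ha' | hb'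
    · rcases d2 with hb' | hc''
      · rw [pair_eq hDcard ha' hb' hab]
        intro x hx; simp at hx ⊢; tauto
      · rw [pair_eq hDcard ha' hc'' (Ne.symm hca)]
        intro x hx; simp at hx ⊢; tauto
    · rcases d3 with ha' | hc''
      · rw [pair_eq hDcard ha' hb' hab]
        intro x hx; simp at hx ⊢; tauto
      · rw [pair_eq hDcard hb' hc'' (Ne.symm hcb)]
        intro x hx; simp at hx ⊢; tauto
  have := Finset.card_le_card hsub
  rw [Finset.card_powersetCard] at this
  have h3 : ({a, b, c} : Finset ℕ).card ≤ 3 := Finset.card_insert_le _ _ |>.trans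
    (by simpa using Nat.succ_le_succ (Finset.card_insert_le b ({c} : Finset ℕ)))
  calc 𝓕.card ≤ _ := this
  _ ≤ Nat.choose 3 2 := Nat.choose_le_choose 2 h3
  _ ≤ n := by simpa using hn
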